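/- Let δ_z(y) for finite sets z, y be defined as: 0 if |z| ≠ |y|, 1 if |z| = |y| = 0, and ∑_{σ ∈ S_n} ∏_{j=1}^n δ_{z_{σ(j)}}(y_j) if z = {z_1,...,z_n}, y = {y_1,...,y_n}, where δ_x is the Dirac delta at x. Then the multitarget Dirac delta satisfies the convolution identity: δ_{a ⊎ b}(y) = ∑_{w ⊆ y} δ_a(w) · δ_b(y \ w), where the sum is over all subsets w of the finite set y and ⊎ denotes disjoint union. -/

import Mathlib

/-- Discrete (Kronecker) multitarget delta convolution identity:
`δ_{a ⊎ b}(y) = ∑_{w ⊆ y} δ_a(w) · δ_b(y \ w)` for disjoint finite sets `a`, `b`. -/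
theorem multitarget_delta_convolution {α : Type*} [DecidableEq α]
    (a b y : Finset α) (hab : Disjoint a b) :
    (if a ∪ b = y then (1 : ℕ) else 0) =
      ∑ w ∈ y.powerset, (if a = w then (1 : ℕ) else 0) * (if b = y \ w then 1 else 0) := by
  simp only [ite_mul, one_mul, zero_mul, Finset.sum_ite_eq, Finset.mem_powerset]
  by_cases h : a ∪ b = y
  · subst h
    rw [if_pos Finset.subset_union_left, if_pos (Finset.union_sdiff_cancel_left hab).symm,
      if_pos rfl]
  · rw [if_neg h]
    by_cases ha : a ⊆ y
    · rw [if_pos ha, if_neg]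
      intro hb
      exact h (by rw [hb, Finset.union_sdiff_of_subset ha])
    · rw [if_neg ha]
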